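/- Let E₀ be the set of length-preserving operations on binary strings consisting of: the identity, flipping one bit, and flipping two adjacent bits (this includes the adjacent transposition 10 ↔ 01 as well as 00 → 11 and 11 → 00). Then for any integers n ≥ 1, 0 ≤ a ≤ 2(n+1), 0 ≤ b ≤ 4, 0 ≤ c ≤ 2n, and any u, v ∈ C_{(a,b,c)}: if some binary word w ∈ {0,1}^n can be obtained from u by one operation from E₀ and also obtained from v by one operation from E₀, then u = v. -/

import Mathlib

namespace BinCode

/-- Hamming weight of a binary string. -/
def wt (u : List Bool) : ℕ := u.count true

/-- The VT syndrome `Σ_{i=1}^{|u|} i·u_i` (positions 1-indexed). -/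
def vtSum (u : List Bool) : ℕ := (u.zipIdx.map fun p => if p.1 then p.2 + 1 else 0).sum

/-- `Σ_{i=1}^{|u|} i · (u_1 + ⋯ + u_i)`. -/
def wSum (u : List Bool) : ℕ :=
  ((List.range u.length).map fun i => (i + 1) * wt (u.take (i + 1))).sum

/-- The (variable-length) Varshamov–Tenengolts code `C_VT(α, m)`. -/
def CVT (α m : ℕ) : Set (List Bool) := {z | z.length ≤ m - 1 ∧ vtSum z % m = α}

/-- The binary code `C_{(a,b,c)} ⊆ {0,1}^n`. -/
def Cabc (n a b c : ℕ) : Set (List Bool) :=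
  {u | u.length = n ∧ vtSum u % (2 * n + 3) = a ∧ wt u % 5 = b ∧
    wSum u % (2 * n + 1) = c}

/-- `w` is obtained from `u` by deleting one bit. -/
def delBit (u w : List Bool) : Prop := ∃ i, i < u.length ∧ w = u.eraseIdx i

/-- `w` is obtained from `u` by inserting the bit `b` at some position. -/
def insBitAt (u w : List Bool) (b : Bool) : Prop :=
  ∃ i, i ≤ u.length ∧ w = u.take i ++ b :: u.drop i

/-- `w` is obtained from `u` by inserting one bit. -/
def insBit (u w : List Bool) : Prop := ∃ b, insBitAt u w b

/-- Flip the bit at 0-based index `i`. -/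
def flipAt (u : List Bool) (i : ℕ) : List Bool := u.set i (!(u.getD i false))

/-- `w` is obtained from `u` by flipping one bit. -/
def flip1 (u w : List Bool) : Prop := ∃ i, i < u.length ∧ w = flipAt u i

/-- `w` is obtained from `u` by flipping two adjacent bits. -/
def flip2 (u w : List Bool) : Prop :=
  ∃ i, i + 1 < u.length ∧ w = flipAt (flipAt u i) (i + 1)

/-- `w` is obtained from `u` by replacing one bit by two adjacent bits via
`0 → 11` or `1 → 00`. -/
def expand1 (u w : List Bool) : Prop :=
  ∃ i, i < u.length ∧
    ((u.getD i false = false ∧ w = u.take i ++ true :: true :: u.drop (i + 1)) ∨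
     (u.getD i false = true ∧ w = u.take i ++ false :: false :: u.drop (i + 1)))

/-- `w` is obtained from `u` by inserting the adjacent pair `b b`. -/
def insPair (u w : List Bool) (b : Bool) : Prop :=
  ∃ i, i ≤ u.length ∧ w = u.take i ++ b :: b :: u.drop i

/-- `w` is obtained from `u` by replacing an occurrence of `1` by `010`. -/
def oneTo010 (u w : List Bool) : Prop :=
  ∃ i, i < u.length ∧ u.getD i false = true ∧
    w = u.take i ++ false :: true :: false :: u.drop (i + 1)


def vtAux (n : ℕ) (u : List Bool) : ℕ :=
  ((u.zipIdx n).map fun p => if p.1 then p.2 + 1 else 0).sum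

lemma vtSum_eq_vtAux (u : List Bool) : vtSum u = vtAux 0 u := rfl

lemma wt_cons (c : Bool) (y : List Bool) : wt (c :: y) = (if c then 1 else 0) + wt y := by
  simp [wt, List.count_cons]; cases c <;> simp [Nat.add_comm]

lemma wt_append (x y : List Bool) : wt (x ++ y) = wt x + wt y := by
  simp [wt, List.count_append]

lemma vtAux_cons (n : ℕ) (c : Bool) (y : List Bool) :
    vtAux n (c :: y) = (if c then n + 1 else 0) + vtAux (n + 1) y := by
  simp [vtAux, List.zipIdx_cons]

lemma vtAux_succ (y : List Bool) : ∀ n, vtAux (n + 1) y = wt y + vtAux n y := by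
  induction y with
  | nil => intro n; simp [vtAux, wt]
  | cons c y ih =>
    intro n
    rw [vtAux_cons, vtAux_cons, ih (n+1), wt_cons]
    cases c <;> simp <;> omega

lemma vtSum_cons (c : Bool) (y : List Bool) :
    vtSum (c :: y) = (if c then 1 else 0) + wt y + vtSum y := by
  rw [vtSum_eq_vtAux, vtAux_cons, vtAux_succ, vtSum_eq_vtAux]
  cases c <;> simp <;> omega

def pSum (u : List Bool) : ℕ := ((List.range u.length).map fun i => wt (u.take (i + 1))).sum
def S (k : ℕ) : ℕ := ((List.range k).map fun i => i + 1).sum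

lemma lsum (f : ℕ → ℕ) (n : ℕ) : ((List.range n).map f).sum = ∑ i ∈ Finset.range n, f i := by
  induction n with
  | zero => simp
  | succ n ih => simp [List.range_succ, Finset.sum_range_succ, ih]

lemma S_succ (k : ℕ) : S (k + 1) = S k + (k + 1) := by
  simp [S, List.range_succ]

lemma wt_nil : wt [] = 0 := rfl

lemma pSum_cons (c : Bool) (y : List Bool) :
    pSum (c :: y) = (y.length + 1) * (if c then 1 else 0) + pSum y := by
  simp only [pSum, List.length_cons, List.take_succ_cons, lsum, wt_cons]
  rw [Finset.sum_add_distrib, Finset.sum_const, Finset.sum_range_succ']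
  simp [Nat.mul_comm, wt_nil]

lemma wSum_cons (c : Bool) (y : List Bool) :
    wSum (c :: y) = S (y.length + 1) * (if c then 1 else 0) + wSum y + pSum y := by
  simp only [wSum, List.length_cons, List.take_succ_cons, lsum, wt_cons, Nat.mul_add]
  rw [Finset.sum_add_distrib]
  have h1 : ∑ i ∈ Finset.range (y.length + 1), (i + 1) * (if c then 1 else 0)
      = S (y.length + 1) * (if c then 1 else 0) := by
    rw [← Finset.sum_mul, S, lsum]
  have h2 : ∑ i ∈ Finset.range (y.length + 1), (i + 1) * wt (y.take i)
      = wSum y + pSum y := by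
    rw [Finset.sum_range_succ']
    have : ∀ i, (i + 1 + 1) * wt (y.take (i + 1))
        = (i + 1) * wt (y.take (i + 1)) + wt (y.take (i + 1)) := fun i => by ring
    simp only [this, Finset.sum_add_distrib, List.take_zero, wt_nil]
    simp [pSum, wSum, lsum]
  rw [h1, h2]
  simp [wSum, lsum]
  omega

lemma wt_flip (x y : List Bool) : wt (x ++ true :: y) = wt (x ++ false :: y) + 1 := by
  simp [wt, List.count_append, List.count_cons]; omega

lemma vt_flip (x y : List Bool) :
    vtSum (x ++ true :: y) = vtSum (x ++ false :: y) + (x.length + 1) := by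
  induction x with
  | nil => simp [vtSum_cons]; omega
  | cons c x ih =>
    simp only [List.cons_append, vtSum_cons, ih, wt_flip, List.length_cons]
    omega

lemma pSum_swap (x y : List Bool) :
    pSum (x ++ true :: false :: y) = pSum (x ++ false :: true :: y) + 1 := by
  induction x with
  | nil => simp [pSum_cons]; omega
  | cons c x ih =>
    have hl : (x ++ true :: false :: y).length = (x ++ false :: true :: y).length := by simp
    simp only [List.cons_append, pSum_cons, ih, hl]
    omega

lemma wt_swap (x y : List Bool) : wt (x ++ true :: false :: y) = wt (x ++ false :: true :: y) := by
  simp [wt, List.count_append, List.count_cons]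

lemma wSum_swap (x y : List Bool) :
    wSum (x ++ true :: false :: y) = wSum (x ++ false :: true :: y) + (x.length + 1) := by
  induction x with
  | nil =>
    simp only [List.nil_append, wSum_cons, pSum_cons, List.length_cons, S_succ]
    simp; omega
  | cons c x ih =>
    have hl : (x ++ true :: false :: y).length = (x ++ false :: true :: y).length := by simp
    simp only [List.cons_append, wSum_cons, ih, hl, pSum_swap, List.length_cons]
    omega

lemma vt_swap (x y : List Bool) :
    vtSum (x ++ false :: true :: y) = vtSum (x ++ true :: false :: y) + 1 := by
  have h1 := vt_flip x (false :: y)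
  have h2 : vtSum (x ++ false :: true :: y) = vtSum (x ++ false :: false :: y) + (x.length + 2) := by
    have e1 : x ++ false :: true :: y = (x ++ [false]) ++ true :: y := by simp
    have e2 : x ++ false :: false :: y = (x ++ [false]) ++ false :: y := by simp
    rw [e1, e2, vt_flip]; simp
  omega

lemma vt_pair (x y : List Bool) :
    vtSum (x ++ true :: true :: y) = vtSum (x ++ false :: false :: y) + (2 * x.length + 3) := by
  have h1 := vt_flip x (true :: y)
  have h2 : vtSum (x ++ false :: true :: y) = vtSum (x ++ false :: false :: y) + (x.length + 2) := by
    have e1 : x ++ false :: true :: y = (x ++ [false]) ++ true :: y := by simp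
    have e2 : x ++ false :: false :: y = (x ++ [false]) ++ false :: y := by simp
    rw [e1, e2, vt_flip]; simp
  omega

lemma wt_pair (x y : List Bool) :
    wt (x ++ true :: true :: y) = wt (x ++ false :: false :: y) + 2 := by
  simp [wt, List.count_append, List.count_cons]; omega


lemma set_at (x : List Bool) (c d : Bool) (z : List Bool) :
    (x ++ c :: z).set x.length d = x ++ d :: z := by
  induction x with
  | nil => rfl
  | cons e x ih => simp [List.set, ih]

lemma getD_at (x : List Bool) (c : Bool) (z : List Bool) :
    (x ++ c :: z).getD x.length false = c := by
  induction x with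
  | nil => rfl
  | cons e x ih => simpa using ih

lemma flipAt_at (x : List Bool) (c : Bool) (z : List Bool) :
    flipAt (x ++ c :: z) x.length = x ++ (!c) :: z := by
  rw [flipAt, getD_at, set_at]

lemma decomp1 (u : List Bool) (i : ℕ) (h : i < u.length) :
    ∃ x c z, u = x ++ c :: z ∧ x.length = i := by
  refine ⟨u.take i, u[i], u.drop (i + 1), ?_, by simp [Nat.le_of_lt h]⟩
  rw [List.getElem_cons_drop h, List.take_append_drop]

lemma decomp2 (u : List Bool) (i : ℕ) (h : i + 1 < u.length) :
    ∃ x c c' z, u = x ++ c :: c' :: z ∧ x.length = i := by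
  refine ⟨u.take i, u[i], u[i + 1], u.drop (i + 2), ?_, by simp; omega⟩
  rw [List.getElem_cons_drop h, List.getElem_cons_drop (as := u) (i := i) (by omega),
    List.take_append_drop]


lemma mod_add_inj {M x d e : ℕ} (hd : d < M) (he : e < M)
    (h : (x + d) % M = (x + e) % M) : d = e := by
  have h2 : d ≡ e [MOD M] :=
    Nat.ModEq.add_left_cancel (Nat.ModEq.refl x) h
  rwa [Nat.ModEq, Nat.mod_eq_of_lt hd, Nat.mod_eq_of_lt he] at h2

lemma pos_eq {M A B C d e : ℕ} (hA : A + d = C) (hB : B + e = C)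
    (hAB : A % M = B % M) (hd : d < M) (he : e < M) : d = e := by
  apply mod_add_inj hd he (x := B)
  calc (B + d) % M = (A + d) % M := (Nat.ModEq.add_right d hAB.symm)
    _ = (B + e) % M := by rw [hA, hB]


/-- The set `E₀` of length-preserving operations: identity, flipping one bit,
and flipping two adjacent bits. -/
def E0 (u w : List Bool) : Prop := w = u ∨ flip1 u w ∨ flip2 u w

lemma E0_cases (u w : List Bool) (h : E0 u w) :
    w = u ∨
    (∃ x y, u = x ++ false :: y ∧ w = x ++ true :: y) ∨
    (∃ x y, u = x ++ true :: y ∧ w = x ++ false :: y) ∨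
    (∃ x y, u = x ++ false :: false :: y ∧ w = x ++ true :: true :: y) ∨
    (∃ x y, u = x ++ true :: true :: y ∧ w = x ++ false :: false :: y) ∨
    (∃ x y, u = x ++ true :: false :: y ∧ w = x ++ false :: true :: y) ∨
    (∃ x y, u = x ++ false :: true :: y ∧ w = x ++ true :: false :: y) := by
  rcases h with h | ⟨i, hi, hw⟩ | ⟨i, hi, hw⟩
  · exact Or.inl h
  · obtain ⟨x, c, z, hu, hx⟩ := decomp1 u i hi
    subst hu; subst hx
    rw [flipAt_at] at hw
    cases c
    · exact Or.inr (Or.inl ⟨x, z, rfl, hw⟩)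
    · exact Or.inr (Or.inr (Or.inl ⟨x, z, rfl, hw⟩))
  · obtain ⟨x, c, c', z, hu, hx⟩ := decomp2 u i hi
    subst hu; subst hx
    rw [flipAt_at] at hw
    have e : x ++ (!c) :: c' :: z = (x ++ [!c]) ++ c' :: z := by simp
    rw [e] at hw
    have e2 : (x ++ [!c]).length = x.length + 1 := by simp
    rw [← e2, flipAt_at] at hw
    have e3 : (x ++ [!c]) ++ (!c') :: z = x ++ (!c) :: (!c') :: z := by simp
    rw [e3] at hw
    cases c <;> cases c'
    · exact Or.inr (Or.inr (Or.inr (Or.inl ⟨x, z, rfl, hw⟩)))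
    · exact Or.inr (Or.inr (Or.inr (Or.inr (Or.inr (Or.inr ⟨x, z, rfl, hw⟩)))))
    · exact Or.inr (Or.inr (Or.inr (Or.inr (Or.inr (Or.inl ⟨x, z, rfl, hw⟩)))))
    · exact Or.inr (Or.inr (Or.inr (Or.inr (Or.inl ⟨x, z, rfl, hw⟩))))


/-- `C_{(a,b,c)}` corrects a single occurrence of an operation
from `E₀`. -/
theorem code_abc_corrects_length_preserving
    (n a b c : ℕ) (hn : 1 ≤ n) (ha : a ≤ 2 * (n + 1)) (hb : b ≤ 4) (hc : c ≤ 2 * n)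
    (u v : List Bool) (hu : u ∈ Cabc n a b c) (hv : v ∈ Cabc n a b c)
    (w : List Bool) (hwlen : w.length = n)
    (hw1 : E0 u w) (hw2 : E0 v w) : u = v := by
  obtain ⟨hul, hua, hub, huc⟩ := hu
  obtain ⟨hvl, hva, hvb, hvc⟩ := hv
  have hvt : vtSum u % (2 * n + 3) = vtSum v % (2 * n + 3) := by rw [hua, hva]
  have hwt5 : wt u % 5 = wt v % 5 := by rw [hub, hvb]
  have hws : wSum u % (2 * n + 1) = wSum v % (2 * n + 1) := by rw [huc, hvc]
  rcases E0_cases u w hw1 with hA | ⟨x, y, h1, h2⟩ | ⟨x, y, h1, h2⟩ | ⟨x, y, h1, h2⟩ | ⟨x, y, h1, h2⟩ | ⟨x, y, h1, h2⟩ | ⟨x, y, h1, h2⟩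
  · rcases E0_cases v w hw2 with hB | ⟨x', y', g1, g2⟩ | ⟨x', y', g1, g2⟩ | ⟨x', y', g1, g2⟩ | ⟨x', y', g1, g2⟩ | ⟨x', y', g1, g2⟩ | ⟨x', y', g1, g2⟩
    · exact hA.symm.trans hB
    · exfalso
      have fu : wt w = wt u := by rw [hA]
      have fv : wt w = wt v + 1 := by rw [g1, g2]; exact wt_flip x' y'
      omega
    · exfalso
      have fu : wt w = wt u := by rw [hA]
      have fv : wt v = wt w + 1 := by rw [g1, g2]; exact wt_flip x' y'
      omega
    · exfalso
      have fu : wt w = wt u := by rw [hA]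
      have fv : wt w = wt v + 2 := by rw [g1, g2]; exact wt_pair x' y'
      omega
    · exfalso
      have fu : wt w = wt u := by rw [hA]
      have fv : wt v = wt w + 2 := by rw [g1, g2]; exact wt_pair x' y'
      omega
    · exfalso
      have vv : vtSum w = vtSum v + 1 := by rw [g1, g2]; exact vt_swap x' y'
      have e : vtSum u = vtSum v + 1 := by rw [← hA]; exact vv
      have h0 : (vtSum v + 1) % (2 * n + 3) = (vtSum v + 0) % (2 * n + 3) := by rw [← e, Nat.add_zero]; exact hvt
      have := mod_add_inj (by omega) (by omega) h0
      omega
    · exfalso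
      have vv : vtSum v = vtSum w + 1 := by rw [g1, g2]; exact vt_swap x' y'
      have e : vtSum v = vtSum u + 1 := by rw [hA] at vv; exact vv
      have h0 : (vtSum u + 1) % (2 * n + 3) = (vtSum u + 0) % (2 * n + 3) := by rw [← e, Nat.add_zero]; exact hvt.symm
      have := mod_add_inj (by omega) (by omega) h0
      omega
  · rcases E0_cases v w hw2 with hB | ⟨x', y', g1, g2⟩ | ⟨x', y', g1, g2⟩ | ⟨x', y', g1, g2⟩ | ⟨x', y', g1, g2⟩ | ⟨x', y', g1, g2⟩ | ⟨x', y', g1, g2⟩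
    · exfalso
      have fu : wt w = wt u + 1 := by rw [h1, h2]; exact wt_flip x y
      have fv : wt w = wt v := by rw [hB]
      omega
    · have Lu : x.length + 1 + y.length = n := by rw [h1] at hul; simp at hul; omega
      have Lv : x'.length + 1 + y'.length = n := by rw [g1] at hvl; simp at hvl; omega
      have vu : vtSum w = vtSum u + (x.length + 1) := by rw [h1, h2]; exact vt_flip x y
      have vv : vtSum w = vtSum v + (x'.length + 1) := by rw [g1, g2]; exact vt_flip x' y'
      have hd : (x.length + 1) = (x'.length + 1) := pos_eq vu.symm vv.symm hvt (by omega) (by omega)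
      have hlen : x.length = x'.length := by omega
      have hw' := h2.symm.trans g2
      obtain ⟨hx1, hy1⟩ := List.append_inj hw' hlen
      have hy2 : y = y' := by simpa using hy1
      rw [h1, g1, hx1, hy2]
    · exfalso
      have fu : wt w = wt u + 1 := by rw [h1, h2]; exact wt_flip x y
      have fv : wt v = wt w + 1 := by rw [g1, g2]; exact wt_flip x' y'
      omega
    · exfalso
      have fu : wt w = wt u + 1 := by rw [h1, h2]; exact wt_flip x y
      have fv : wt w = wt v + 2 := by rw [g1, g2]; exact wt_pair x' y'
      omega
    · exfalso
      have fu : wt w = wt u + 1 := by rw [h1, h2]; exact wt_flip x y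
      have fv : wt v = wt w + 2 := by rw [g1, g2]; exact wt_pair x' y'
      omega
    · exfalso
      have fu : wt w = wt u + 1 := by rw [h1, h2]; exact wt_flip x y
      have fv : wt w = wt v := by rw [g1, g2]; exact (wt_swap x' y').symm
      omega
    · exfalso
      have fu : wt w = wt u + 1 := by rw [h1, h2]; exact wt_flip x y
      have fv : wt w = wt v := by rw [g1, g2]; exact wt_swap x' y'
      omega
  · rcases E0_cases v w hw2 with hB | ⟨x', y', g1, g2⟩ | ⟨x', y', g1, g2⟩ | ⟨x', y', g1, g2⟩ | ⟨x', y', g1, g2⟩ | ⟨x', y', g1, g2⟩ | ⟨x', y', g1, g2⟩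
    · exfalso
      have fu : wt u = wt w + 1 := by rw [h1, h2]; exact wt_flip x y
      have fv : wt w = wt v := by rw [hB]
      omega
    · exfalso
      have fu : wt u = wt w + 1 := by rw [h1, h2]; exact wt_flip x y
      have fv : wt w = wt v + 1 := by rw [g1, g2]; exact wt_flip x' y'
      omega
    · have Lu : x.length + 1 + y.length = n := by rw [h1] at hul; simp at hul; omega
      have Lv : x'.length + 1 + y'.length = n := by rw [g1] at hvl; simp at hvl; omega
      have vu : vtSum u = vtSum w + (x.length + 1) := by rw [h1, h2]; exact vt_flip x y
      have vv : vtSum v = vtSum w + (x'.length + 1) := by rw [g1, g2]; exact vt_flip x' y'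
      have h0 : (vtSum w + (x.length + 1)) % (2 * n + 3) = (vtSum w + (x'.length + 1)) % (2 * n + 3) := by rw [← vu, ← vv]; exact hvt
      have hd := mod_add_inj (by omega) (by omega) h0
      have hlen : x.length = x'.length := by omega
      have hw' := h2.symm.trans g2
      obtain ⟨hx1, hy1⟩ := List.append_inj hw' hlen
      have hy2 : y = y' := by simpa using hy1
      rw [h1, g1, hx1, hy2]
    · exfalso
      have fu : wt u = wt w + 1 := by rw [h1, h2]; exact wt_flip x y
      have fv : wt w = wt v + 2 := by rw [g1, g2]; exact wt_pair x' y'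
      omega
    · exfalso
      have fu : wt u = wt w + 1 := by rw [h1, h2]; exact wt_flip x y
      have fv : wt v = wt w + 2 := by rw [g1, g2]; exact wt_pair x' y'
      omega
    · exfalso
      have fu : wt u = wt w + 1 := by rw [h1, h2]; exact wt_flip x y
      have fv : wt w = wt v := by rw [g1, g2]; exact (wt_swap x' y').symm
      omega
    · exfalso
      have fu : wt u = wt w + 1 := by rw [h1, h2]; exact wt_flip x y
      have fv : wt w = wt v := by rw [g1, g2]; exact wt_swap x' y'
      omega
  · rcases E0_cases v w hw2 with hB | ⟨x', y', g1, g2⟩ | ⟨x', y', g1, g2⟩ | ⟨x', y', g1, g2⟩ | ⟨x', y', g1, g2⟩ | ⟨x', y', g1, g2⟩ | ⟨x', y', g1, g2⟩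
    · exfalso
      have fu : wt w = wt u + 2 := by rw [h1, h2]; exact wt_pair x y
      have fv : wt w = wt v := by rw [hB]
      omega
    · exfalso
      have fu : wt w = wt u + 2 := by rw [h1, h2]; exact wt_pair x y
      have fv : wt w = wt v + 1 := by rw [g1, g2]; exact wt_flip x' y'
      omega
    · exfalso
      have fu : wt w = wt u + 2 := by rw [h1, h2]; exact wt_pair x y
      have fv : wt v = wt w + 1 := by rw [g1, g2]; exact wt_flip x' y'
      omega
    · have Lu : x.length + 2 + y.length = n := by rw [h1] at hul; simp at hul; omega
      have Lv : x'.length + 2 + y'.length = n := by rw [g1] at hvl; simp at hvl; omega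
      have vu : vtSum w = vtSum u + (2 * x.length + 3) := by rw [h1, h2]; exact vt_pair x y
      have vv : vtSum w = vtSum v + (2 * x'.length + 3) := by rw [g1, g2]; exact vt_pair x' y'
      have hd : (2 * x.length + 3) = (2 * x'.length + 3) := pos_eq vu.symm vv.symm hvt (by omega) (by omega)
      have hlen : x.length = x'.length := by omega
      have hw' := h2.symm.trans g2
      obtain ⟨hx1, hy1⟩ := List.append_inj hw' hlen
      have hy2 : y = y' := by simpa using hy1
      rw [h1, g1, hx1, hy2]
    · exfalso
      have fu : wt w = wt u + 2 := by rw [h1, h2]; exact wt_pair x y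
      have fv : wt v = wt w + 2 := by rw [g1, g2]; exact wt_pair x' y'
      omega
    · exfalso
      have fu : wt w = wt u + 2 := by rw [h1, h2]; exact wt_pair x y
      have fv : wt w = wt v := by rw [g1, g2]; exact (wt_swap x' y').symm
      omega
    · exfalso
      have fu : wt w = wt u + 2 := by rw [h1, h2]; exact wt_pair x y
      have fv : wt w = wt v := by rw [g1, g2]; exact wt_swap x' y'
      omega
  · rcases E0_cases v w hw2 with hB | ⟨x', y', g1, g2⟩ | ⟨x', y', g1, g2⟩ | ⟨x', y', g1, g2⟩ | ⟨x', y', g1, g2⟩ | ⟨x', y', g1, g2⟩ | ⟨x', y', g1, g2⟩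
    · exfalso
      have fu : wt u = wt w + 2 := by rw [h1, h2]; exact wt_pair x y
      have fv : wt w = wt v := by rw [hB]
      omega
    · exfalso
      have fu : wt u = wt w + 2 := by rw [h1, h2]; exact wt_pair x y
      have fv : wt w = wt v + 1 := by rw [g1, g2]; exact wt_flip x' y'
      omega
    · exfalso
      have fu : wt u = wt w + 2 := by rw [h1, h2]; exact wt_pair x y
      have fv : wt v = wt w + 1 := by rw [g1, g2]; exact wt_flip x' y'
      omega
    · exfalso
      have fu : wt u = wt w + 2 := by rw [h1, h2]; exact wt_pair x y
      have fv : wt w = wt v + 2 := by rw [g1, g2]; exact wt_pair x' y'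
      omega
    · have Lu : x.length + 2 + y.length = n := by rw [h1] at hul; simp at hul; omega
      have Lv : x'.length + 2 + y'.length = n := by rw [g1] at hvl; simp at hvl; omega
      have vu : vtSum u = vtSum w + (2 * x.length + 3) := by rw [h1, h2]; exact vt_pair x y
      have vv : vtSum v = vtSum w + (2 * x'.length + 3) := by rw [g1, g2]; exact vt_pair x' y'
      have h0 : (vtSum w + (2 * x.length + 3)) % (2 * n + 3) = (vtSum w + (2 * x'.length + 3)) % (2 * n + 3) := by rw [← vu, ← vv]; exact hvt
      have hd := mod_add_inj (by omega) (by omega) h0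
      have hlen : x.length = x'.length := by omega
      have hw' := h2.symm.trans g2
      obtain ⟨hx1, hy1⟩ := List.append_inj hw' hlen
      have hy2 : y = y' := by simpa using hy1
      rw [h1, g1, hx1, hy2]
    · exfalso
      have fu : wt u = wt w + 2 := by rw [h1, h2]; exact wt_pair x y
      have fv : wt w = wt v := by rw [g1, g2]; exact (wt_swap x' y').symm
      omega
    · exfalso
      have fu : wt u = wt w + 2 := by rw [h1, h2]; exact wt_pair x y
      have fv : wt w = wt v := by rw [g1, g2]; exact wt_swap x' y'
      omega
  · rcases E0_cases v w hw2 with hB | ⟨x', y', g1, g2⟩ | ⟨x', y', g1, g2⟩ | ⟨x', y', g1, g2⟩ | ⟨x', y', g1, g2⟩ | ⟨x', y', g1, g2⟩ | ⟨x', y', g1, g2⟩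
    · exfalso
      have vu : vtSum w = vtSum u + 1 := by rw [h1, h2]; exact vt_swap x y
      have e : vtSum v = vtSum u + 1 := by rw [← hB]; exact vu
      have h0 : (vtSum u + 1) % (2 * n + 3) = (vtSum u + 0) % (2 * n + 3) := by rw [← e, Nat.add_zero]; exact hvt.symm
      have := mod_add_inj (by omega) (by omega) h0
      omega
    · exfalso
      have fu : wt w = wt u := by rw [h1, h2]; exact (wt_swap x y).symm
      have fv : wt w = wt v + 1 := by rw [g1, g2]; exact wt_flip x' y'
      omega
    · exfalso
      have fu : wt w = wt u := by rw [h1, h2]; exact (wt_swap x y).symm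
      have fv : wt v = wt w + 1 := by rw [g1, g2]; exact wt_flip x' y'
      omega
    · exfalso
      have fu : wt w = wt u := by rw [h1, h2]; exact (wt_swap x y).symm
      have fv : wt w = wt v + 2 := by rw [g1, g2]; exact wt_pair x' y'
      omega
    · exfalso
      have fu : wt w = wt u := by rw [h1, h2]; exact (wt_swap x y).symm
      have fv : wt v = wt w + 2 := by rw [g1, g2]; exact wt_pair x' y'
      omega
    · have Lu : x.length + 2 + y.length = n := by rw [h1] at hul; simp at hul; omega
      have Lv : x'.length + 2 + y'.length = n := by rw [g1] at hvl; simp at hvl; omega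
      have su : wSum u = wSum w + (x.length + 1) := by rw [h1, h2]; exact wSum_swap x y
      have sv : wSum v = wSum w + (x'.length + 1) := by rw [g1, g2]; exact wSum_swap x' y'
      have h0 : (wSum w + (x.length + 1)) % (2 * n + 1) = (wSum w + (x'.length + 1)) % (2 * n + 1) := by rw [← su, ← sv]; exact hws
      have hd := mod_add_inj (by omega) (by omega) h0
      have hlen : x.length = x'.length := by omega
      have hw' := h2.symm.trans g2
      obtain ⟨hx1, hy1⟩ := List.append_inj hw' hlen
      have hy2 : y = y' := by simpa using hy1
      rw [h1, g1, hx1, hy2]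
    · exfalso
      have vu : vtSum w = vtSum u + 1 := by rw [h1, h2]; exact vt_swap x y
      have vv : vtSum v = vtSum w + 1 := by rw [g1, g2]; exact vt_swap x' y'
      have e : vtSum v = vtSum u + 2 := by rw [vv, vu]
      have h0 : (vtSum u + 2) % (2 * n + 3) = (vtSum u + 0) % (2 * n + 3) := by rw [← e, Nat.add_zero]; exact hvt.symm
      have := mod_add_inj (by omega) (by omega) h0
      omega
  · rcases E0_cases v w hw2 with hB | ⟨x', y', g1, g2⟩ | ⟨x', y', g1, g2⟩ | ⟨x', y', g1, g2⟩ | ⟨x', y', g1, g2⟩ | ⟨x', y', g1, g2⟩ | ⟨x', y', g1, g2⟩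
    · exfalso
      have vu : vtSum u = vtSum w + 1 := by rw [h1, h2]; exact vt_swap x y
      have e : vtSum u = vtSum v + 1 := by rw [hB] at vu; exact vu
      have h0 : (vtSum v + 1) % (2 * n + 3) = (vtSum v + 0) % (2 * n + 3) := by rw [← e, Nat.add_zero]; exact hvt
      have := mod_add_inj (by omega) (by omega) h0
      omega
    · exfalso
      have fu : wt w = wt u := by rw [h1, h2]; exact wt_swap x y
      have fv : wt w = wt v + 1 := by rw [g1, g2]; exact wt_flip x' y'
      omega
    · exfalso
      have fu : wt w = wt u := by rw [h1, h2]; exact wt_swap x y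
      have fv : wt v = wt w + 1 := by rw [g1, g2]; exact wt_flip x' y'
      omega
    · exfalso
      have fu : wt w = wt u := by rw [h1, h2]; exact wt_swap x y
      have fv : wt w = wt v + 2 := by rw [g1, g2]; exact wt_pair x' y'
      omega
    · exfalso
      have fu : wt w = wt u := by rw [h1, h2]; exact wt_swap x y
      have fv : wt v = wt w + 2 := by rw [g1, g2]; exact wt_pair x' y'
      omega
    · exfalso
      have vu : vtSum u = vtSum w + 1 := by rw [h1, h2]; exact vt_swap x y
      have vv : vtSum w = vtSum v + 1 := by rw [g1, g2]; exact vt_swap x' y'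
      have e : vtSum u = vtSum v + 2 := by rw [vu, vv]
      have h0 : (vtSum v + 2) % (2 * n + 3) = (vtSum v + 0) % (2 * n + 3) := by rw [← e, Nat.add_zero]; exact hvt
      have := mod_add_inj (by omega) (by omega) h0
      omega
    · have Lu : x.length + 2 + y.length = n := by rw [h1] at hul; simp at hul; omega
      have Lv : x'.length + 2 + y'.length = n := by rw [g1] at hvl; simp at hvl; omega
      have su : wSum w = wSum u + (x.length + 1) := by rw [h1, h2]; exact wSum_swap x y
      have sv : wSum w = wSum v + (x'.length + 1) := by rw [g1, g2]; exact wSum_swap x' y'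
      have hd : (x.length + 1) = (x'.length + 1) := pos_eq su.symm sv.symm hws (by omega) (by omega)
      have hlen : x.length = x'.length := by omega
      have hw' := h2.symm.trans g2
      obtain ⟨hx1, hy1⟩ := List.append_inj hw' hlen
      have hy2 : y = y' := by simpa using hy1
      rw [h1, g1, hx1, hy2]


end BinCode
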